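/- arXiv:1002.1500 — 2 statements merged into one kernel-verified Lean document; each statement's English description precedes it below -/
import Mathlib

section
/- Define a partition pair of size n and type r to be a pair (λ, μ) where λ is a partition of n and μ is a sub-partition of λ (a multiset of parts of λ) of length at most r, up to permuting equal parts. Define Q_{n,r} to be the set of pairs (ν, μ) where μ is a partition with |μ| ≤ n and all parts of μ at most r, and ν is a partition of n − |μ|. Then the map (ν, μ) ↦ (ν ∪ μ^t, μ^t), where μ^t is the conjugate partition and ∪ denotes union of multisets of parts, is a bijection from Q_{n,r} to the set P_{n,r} of partition pairs of size n and type r. -/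
/-- The conjugate (transpose) of a partition, given as a multiset of positive
parts: the `j`-th column of the Young diagram has height `#{p ∈ μ : p > j}`. -/
def conjP (μ : Multiset ℕ) : Multiset ℕ :=
  ((Multiset.range μ.sum).map fun j => Multiset.card (μ.filter fun p => j < p)).filter
    fun x => 0 < x

/-- `Q_{n,r}`: pairs `(ν, μ)` where `μ` is a partition with `|μ| ≤ n` and all
parts at most `r`, and `ν` is a partition of `n − |μ|`.  Partitions are
multisets of positive integers. -/
def Qpairs (n r : ℕ) : Set (Multiset ℕ × Multiset ℕ) :=
  {p | (∀ x ∈ p.1, 0 < x) ∧ (∀ x ∈ p.2, 0 < x ∧ x ≤ r) ∧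
    p.2.sum ≤ n ∧ p.1.sum = n - p.2.sum}

/-- `P_{n,r}`: partition pairs of size `n` and type `r`: `λ` a partition of `n`
and `μ ≤ λ` a sub-multiset of its parts with at most `r` elements (using
multisets identifies sub-partitions differing by permuting equal parts). -/
def Ppairs (n r : ℕ) : Set (Multiset ℕ × Multiset ℕ) :=
  {p | (∀ x ∈ p.1, 0 < x) ∧ p.1.sum = n ∧ p.2 ≤ p.1 ∧ Multiset.card p.2 ≤ r}

/-! ### Auxiliary lemmas -/

theorem aux_sum_filter_pos (s : Multiset ℕ) :
    (Multiset.filter (fun x => 0 < x) s).sum = s.sum := by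
  have h := Multiset.filter_add_not (fun x => 0 < x) s
  have h0 : (Multiset.filter (fun x => ¬0 < x) s).sum = 0 := by
    apply Multiset.sum_eq_zero
    intro x hx; simp at hx; omega
  calc (Multiset.filter (fun x => 0 < x) s).sum
      = (Multiset.filter (fun x => 0 < x) s).sum
        + (Multiset.filter (fun x => ¬0 < x) s).sum := by rw [h0, add_zero]
    _ = s.sum := by rw [← Multiset.sum_add, h]

theorem aux_range_filter_lt (s m : ℕ) :
    (Multiset.range s).filter (fun j => j < m) = Multiset.range (min m s) := by
  rw [Multiset.Nodup.ext ((Multiset.nodup_range s).filter _) (Multiset.nodup_range _)]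
  intro a; simp [Multiset.mem_filter]; omega

theorem aux_sum_map_ind (t : Multiset ℕ) (p : ℕ → Prop) [DecidablePred p] :
    (t.map fun j => if p j then 1 else 0).sum = t.countP p := by
  induction t using Multiset.induction with
  | empty => simp
  | cons a s ih => simp [Multiset.countP_cons, ih]; by_cases h : p a <;> simp [h]; omega

theorem aux_sum_heights (μ : Multiset ℕ) (s : ℕ) (hs : ∀ p ∈ μ, p ≤ s) :
    ((Multiset.range s).map fun j => Multiset.card (μ.filter fun p => j < p)).sum = μ.sum := by
  induction μ using Multiset.induction with
  | empty => simp
  | cons a t ih =>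
    have ha : a ≤ s := hs a (Multiset.mem_cons_self a t)
    have ht : ∀ p ∈ t, p ≤ s := fun p hp => hs p (Multiset.mem_cons_of_mem hp)
    have hcard : ∀ j, Multiset.card ((a ::ₘ t).filter fun p => j < p)
        = (if j < a then 1 else 0) + Multiset.card (t.filter fun p => j < p) := by
      intro j
      rw [Multiset.filter_cons, Multiset.card_add]
      by_cases h : j < a <;> simp [h]
    calc ((Multiset.range s).map fun j => Multiset.card ((a ::ₘ t).filter fun p => j < p)).sum
        = ((Multiset.range s).map fun j =>
            (if j < a then 1 else 0) + Multiset.card (t.filter fun p => j < p)).sum := by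
          simp only [hcard]
      _ = ((Multiset.range s).map fun j => if j < a then 1 else 0).sum
          + ((Multiset.range s).map fun j => Multiset.card (t.filter fun p => j < p)).sum := by
          rw [Multiset.sum_map_add]
      _ = a + t.sum := by
          rw [ih ht, aux_sum_map_ind, Multiset.countP_eq_card_filter, aux_range_filter_lt,
            Multiset.card_range, min_eq_left ha]
      _ = (a ::ₘ t).sum := by simp

theorem sum_conjP (μ : Multiset ℕ) : (conjP μ).sum = μ.sum := by
  rw [conjP, aux_sum_filter_pos]
  exact aux_sum_heights μ μ.sum fun p hp =>
    Multiset.single_le_sum (fun x _ => Nat.zero_le x) _ hp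

theorem pos_of_mem_conjP {μ : Multiset ℕ} {x : ℕ} (hx : x ∈ conjP μ) : 0 < x :=
  (Multiset.mem_filter.mp hx).2

theorem mem_conjP_le_card {μ : Multiset ℕ} {x : ℕ} (hx : x ∈ conjP μ) :
    x ≤ Multiset.card μ := by
  obtain ⟨hm, -⟩ := Multiset.mem_filter.mp hx
  obtain ⟨j, -, rfl⟩ := Multiset.mem_map.mp hm
  exact Multiset.card_le_card (Multiset.filter_le _ _)

theorem card_conjP_le {μ : Multiset ℕ} {r : ℕ} (h : ∀ p ∈ μ, p ≤ r) :
    Multiset.card (conjP μ) ≤ r := by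
  rw [conjP, Multiset.filter_map]
  refine le_trans (Multiset.card_le_card (le_trans
    (Multiset.map_le_map (Multiset.monotone_filter_right _
      (q := fun j => j < r) ?_)) (le_refl _))) ?_
  · intro j hj
    simp only [Function.comp, Multiset.card_pos_iff_exists_mem] at hj
    obtain ⟨p, hp⟩ := hj
    rw [Multiset.mem_filter] at hp
    exact lt_of_lt_of_le hp.2 (h p hp.1)
  · rw [aux_range_filter_lt, Multiset.card_map, Multiset.card_range]
    omega

/-! ### Young diagram bridge: `conjP` is an involution on partitions -/

theorem aux_coe_rowLens_transpose (T : YoungDiagram) : (T.transpose.rowLens : Multiset ℕ) =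
    (Multiset.range (T.rowLen 0)).map T.colLen := by
  rw [YoungDiagram.rowLens]
  simp only [YoungDiagram.colLen_transpose]
  rw [← Multiset.map_coe, Multiset.coe_range]
  congr 1
  funext i
  exact T.rowLen_transpose i

/-- the Young diagram of a multiset of positive parts -/
def toYD (μ : Multiset ℕ) (_h : ∀ x ∈ μ, 0 < x) : YoungDiagram :=
  YoungDiagram.ofRowLens (μ.sort (· ≥ ·)) (Multiset.pairwise_sort (s := μ) (r := (· ≥ ·))).sortedGE

theorem rowLens_toYD (μ : Multiset ℕ) (h : ∀ x ∈ μ, 0 < x) :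
    (toYD μ h).rowLens = μ.sort (· ≥ ·) :=
  YoungDiagram.rowLens_ofRowLens_eq_self (fun x hx => h x ((Multiset.mem_sort _).mp hx))

theorem coe_rowLens_toYD (μ : Multiset ℕ) (h : ∀ x ∈ μ, 0 < x) :
    ((toYD μ h).rowLens : Multiset ℕ) = μ := by
  rw [rowLens_toYD, Multiset.sort_eq]

theorem rowLens_injective {T₁ T₂ : YoungDiagram} (h : T₁.rowLens = T₂.rowLens) : T₁ = T₂ := by
  rw [← YoungDiagram.ofRowLens_to_rowLens_eq_self (μ := T₁),
    ← YoungDiagram.ofRowLens_to_rowLens_eq_self (μ := T₂)]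
  congr 1

theorem toYD_rowLens (T : YoungDiagram) (h : ∀ x ∈ (T.rowLens : Multiset ℕ), 0 < x) :
    toYD (T.rowLens : Multiset ℕ) h = T := by
  apply rowLens_injective
  rw [rowLens_toYD]
  apply List.Perm.eq_of_sortedGE (Multiset.pairwise_sort (s := _) (r := (· ≥ ·))).sortedGE T.rowLens_sorted
  exact Multiset.coe_eq_coe.mp (Multiset.sort_eq _ _)

theorem colLen_toYD (μ : Multiset ℕ) (h : ∀ x ∈ μ, 0 < x) (j : ℕ) :
    Multiset.card (μ.filter fun p => j < p) = (toYD μ h).colLen j := by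
  set Y := toYD μ h
  have hμ : μ = ((Y.rowLens : List ℕ) : Multiset ℕ) := (coe_rowLens_toYD μ h).symm
  rw [hμ, YoungDiagram.rowLens, ← Multiset.map_coe, Multiset.coe_range,
    Multiset.filter_map]
  have hiff : ∀ i, ((fun p => j < p) ∘ Y.rowLen) i ↔ i < Y.colLen j := fun i => by
    show j < Y.rowLen i ↔ i < Y.colLen j
    rw [← YoungDiagram.mem_iff_lt_rowLen, YoungDiagram.mem_iff_lt_colLen]
  rw [Multiset.filter_congr (fun i _ => hiff i), Multiset.card_map, aux_range_filter_lt,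
    Multiset.card_range, min_eq_left (Y.colLen_anti 0 j (Nat.zero_le j))]

theorem conjP_eq (μ : Multiset ℕ) (h : ∀ x ∈ μ, 0 < x) :
    conjP μ = ((toYD μ h).transpose.rowLens : Multiset ℕ) := by
  set Y := toYD μ h
  have hM : Y.rowLen 0 ≤ μ.sum := by
    rcases Nat.eq_zero_or_pos (Y.rowLen 0) with h0 | h0
    · omega
    · have hmem : (0, 0) ∈ Y := YoungDiagram.mem_iff_lt_rowLen.mpr h0
      have hc : 0 < Y.colLen 0 := YoungDiagram.mem_iff_lt_colLen.mp hmem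
      have : Y.rowLen 0 ∈ (Y.rowLens : Multiset ℕ) := by
        rw [YoungDiagram.rowLens]
        exact List.mem_map_of_mem (List.mem_range.mpr hc)
      rw [coe_rowLens_toYD μ h] at this
      exact Multiset.single_le_sum (fun x _ => Nat.zero_le x) _ this
  rw [aux_coe_rowLens_transpose, conjP]
  simp only [fun j => colLen_toYD μ h j]
  rw [Multiset.filter_map]
  congr 1
  have hiff : ∀ j, ((fun x => 0 < x) ∘ Y.colLen) j ↔ j < Y.rowLen 0 := fun j => by
    show 0 < Y.colLen j ↔ j < Y.rowLen 0
    rw [← YoungDiagram.mem_iff_lt_colLen, YoungDiagram.mem_iff_lt_rowLen]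
  rw [Multiset.filter_congr (fun j _ => hiff j), aux_range_filter_lt, min_eq_left hM]

theorem conjP_conjP (μ : Multiset ℕ) (h : ∀ x ∈ μ, 0 < x) : conjP (conjP μ) = μ := by
  have h1 : ∀ x ∈ conjP μ, 0 < x := fun x hx => pos_of_mem_conjP hx
  rw [conjP_eq μ h] at h1 ⊢
  rw [conjP_eq _ h1, toYD_rowLens (toYD μ h).transpose h1,
    YoungDiagram.transpose_transpose, coe_rowLens_toYD]

/-- the map `(ν, μ) ↦ (ν ∪ μ^t, μ^t)` is a bijection from
`Q_{n,r}` to `P_{n,r}`. -/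
theorem stmt_5 (n r : ℕ) :
    Set.BijOn (fun p : Multiset ℕ × Multiset ℕ => (p.1 + conjP p.2, conjP p.2))
      (Qpairs n r) (Ppairs n r) := by
  refine ⟨?_, ?_, ?_⟩
  · -- MapsTo
    rintro ⟨ν, μ⟩ ⟨h1, h2, h3, h4⟩
    dsimp only at h1 h2 h3 h4
    refine ⟨?_, ?_, ?_, ?_⟩
    · intro x hx
      rcases Multiset.mem_add.mp hx with hx | hx
      · exact h1 x hx
      · exact pos_of_mem_conjP hx
    · show (ν + conjP μ).sum = n
      rw [Multiset.sum_add, sum_conjP, h4]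
      omega
    · exact Multiset.le_add_left _ _
    · exact card_conjP_le fun p hp => (h2 p hp).2
  · -- InjOn
    rintro ⟨ν₁, μ₁⟩ h₁ ⟨ν₂, μ₂⟩ h₂ heq
    simp only [Prod.mk.injEq] at heq
    obtain ⟨he1, he2⟩ := heq
    have hμ : μ₁ = μ₂ := by
      have := congrArg conjP he2
      rwa [conjP_conjP μ₁ (fun x hx => (h₁.2.1 x hx).1),
        conjP_conjP μ₂ (fun x hx => (h₂.2.1 x hx).1)] at this
    subst hμ
    have hν : ν₁ = ν₂ := add_right_cancel he1
    rw [hν]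
  · -- SurjOn
    rintro ⟨l, μ⟩ ⟨h1, h2, h3, h4⟩
    dsimp only at h1 h2 h3 h4
    have hpos2 : ∀ x ∈ μ, 0 < x := fun x hx => h1 x (Multiset.mem_of_le h3 hx)
    have hsum : μ.sum ≤ n := by
      obtain ⟨u, hu⟩ := Multiset.le_iff_exists_add.mp h3
      have := congrArg Multiset.sum hu
      rw [Multiset.sum_add] at this
      omega
    have hc : conjP (conjP μ) = μ := conjP_conjP μ hpos2
    refine ⟨(l - μ, conjP μ), ⟨?_, ?_, ?_, ?_⟩, ?_⟩
    · exact fun x hx => h1 x (Multiset.mem_of_le (Multiset.sub_le_self _ _) hx)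
    · exact fun x hx => ⟨pos_of_mem_conjP hx, le_trans (mem_conjP_le_card hx) h4⟩
    · show (conjP μ).sum ≤ n
      rw [sum_conjP]; exact hsum
    · show (l - μ).sum = n - (conjP μ).sum
      rw [sum_conjP]
      have hadd : l - μ + μ = l := tsub_add_cancel_of_le h3
      have := congrArg Multiset.sum hadd
      rw [Multiset.sum_add] at this
      omega
    · show (l - μ + conjP (conjP μ), conjP (conjP μ)) = (l, μ)
      rw [hc, tsub_add_cancel_of_le h3]
end

section
/- The number of monomials of graded degree n in variables u_1, ..., u_n, v_1, ..., v_r, where u_i has degree i and v_j has degree j, equals the number of partition pairs (λ, μ) of size n and type r (λ a partition of n, μ a sub-multiset of the parts of λ with at most r elements). -/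
open Finset

/-! ### Suffix sums on `Fin r` -/

def sufSum {r : ℕ} (m : Fin r → ℕ) (j : Fin r) : ℕ := ∑ k ∈ Ici j, m k

def difOf {r : ℕ} (a : Fin r → ℕ) (j : Fin r) : ℕ :=
  if h : (j : ℕ) + 1 < r then a j - a ⟨(j : ℕ) + 1, h⟩ else a j

lemma antitone_sufSum {r : ℕ} (m : Fin r → ℕ) : Antitone (sufSum m) := by
  intro i j hij
  exact Finset.sum_le_sum_of_subset (Finset.Ici_subset_Ici.mpr hij)

lemma sum_sufSum {r : ℕ} (m : Fin r → ℕ) :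
    ∑ j, sufSum m j = ∑ k : Fin r, ((k : ℕ) + 1) * m k := by
  unfold sufSum
  calc ∑ j : Fin r, ∑ k ∈ Ici j, m k
      = ∑ j : Fin r, ∑ k : Fin r, if j ≤ k then m k else 0 := by
        refine Finset.sum_congr rfl fun j _ => ?_
        rw [show Ici j = univ.filter (fun k => j ≤ k) by ext k; simp, Finset.sum_filter]
    _ = ∑ k : Fin r, ∑ j : Fin r, if j ≤ k then m k else 0 := Finset.sum_comm
    _ = ∑ k : Fin r, ((k : ℕ) + 1) * m k := by
        refine Finset.sum_congr rfl fun k _ => ?_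
        rw [← Finset.sum_filter, show univ.filter (fun j => j ≤ k) = Iic k by ext j; simp,
          Finset.sum_const, Fin.card_Iic, smul_eq_mul]

lemma difOf_sufSum {r : ℕ} (m : Fin r → ℕ) : difOf (sufSum m) = m := by
  funext j
  unfold difOf sufSum
  split_ifs with h
  · have hins : Ici j = insert j (Ici (⟨(j : ℕ) + 1, h⟩ : Fin r)) := by
      ext k
      simp only [Finset.mem_Ici, Finset.mem_insert, Fin.le_def]
      constructor
      · intro hk
        rcases eq_or_lt_of_le hk with h1 | h1
        · left; exact (Fin.ext h1.symm)
        · right; exact h1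
      · rintro (rfl | hk)
        · exact le_refl _
        · exact Nat.le_of_succ_le hk
    rw [hins, Finset.sum_insert (by simp [Fin.le_def])]
    simp
  · have : Ici j = {j} := by
      ext k
      simp only [Finset.mem_Ici, Finset.mem_singleton, Fin.le_def]
      constructor
      · intro hk
        have hk2 : (k : ℕ) < (j : ℕ) + 1 := lt_of_lt_of_le k.isLt (not_lt.mp h)
        exact Fin.ext (Nat.le_antisymm (Nat.lt_succ_iff.mp hk2) hk)
      · rintro rfl; exact le_refl _
    rw [this, Finset.sum_singleton]

lemma sufSum_difOf {r : ℕ} (a : Fin r → ℕ) (ha : Antitone a) : sufSum (difOf a) = a := by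
  funext j
  unfold sufSum
  induction r with
  | zero => exact absurd j.isLt (by omega)
  | succ s ih =>
    clear ih
    induction j using Fin.reverseInduction with
    | last =>
      have h1 : Ici (Fin.last s) = {Fin.last s} := by
        ext k; simp [Fin.last_le_iff]
      rw [h1, Finset.sum_singleton]
      unfold difOf
      rw [dif_neg (by simp)]
    | cast i ihs =>
      have hins : Ici i.castSucc = insert i.castSucc (Ici i.succ) := by
        ext k
        simp only [Finset.mem_Ici, Finset.mem_insert, Fin.le_def, Fin.coe_castSucc, Fin.val_succ]
        constructor
        · intro hk
          rcases eq_or_lt_of_le hk with h1 | h1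
          · left; exact Fin.ext h1.symm
          · right; exact h1
        · rintro (rfl | hk)
          · exact le_refl _
          · omega
      rw [hins, Finset.sum_insert (by simp [Fin.le_def]), ihs]
      have hd : difOf a i.castSucc = a i.castSucc - a i.succ := by
        unfold difOf
        have h : (i.castSucc : ℕ) + 1 < s + 1 := by simp [Fin.is_lt]
        rw [dif_pos h]
        rfl
      rw [hd]
      exact Nat.sub_add_cancel (ha (Fin.castSucc_le_succ i))

/-! ### μ part : antitone functions vs multisets with at most r positive parts -/

def muOf {r : ℕ} (a : Fin r → ℕ) : Multiset ℕ :=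
  Multiset.filter (0 < ·) (List.ofFn a : Multiset ℕ)

def padList (r : ℕ) (μ : Multiset ℕ) : List ℕ :=
  μ.sort (· ≥ ·) ++ List.replicate (r - Multiset.card μ) 0

def aOf {r : ℕ} (μ : Multiset ℕ) (j : Fin r) : ℕ := (padList r μ).getD j 0

lemma sorted_padList (r : ℕ) (μ : Multiset ℕ) : List.Pairwise (· ≥ ·) (padList r μ) := by
  unfold padList
  rw [List.pairwise_append]
  refine ⟨Multiset.pairwise_sort _ _, ?_, ?_⟩
  · induction (r - Multiset.card μ) with
    | zero => simp
    | succ k ih =>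
      rw [List.replicate_succ, List.pairwise_cons]
      exact ⟨fun y hy => by rw [List.eq_of_mem_replicate hy], ih⟩
  · intro x _ y hy
    rw [List.eq_of_mem_replicate hy]
    exact Nat.zero_le x

lemma length_padList (r : ℕ) (μ : Multiset ℕ) (h : Multiset.card μ ≤ r) :
    (padList r μ).length = r := by
  unfold padList
  rw [List.length_append, List.length_replicate, Multiset.length_sort]
  omega

lemma coe_padList (r : ℕ) (μ : Multiset ℕ) :
    (padList r μ : Multiset ℕ) = μ + Multiset.replicate (r - Multiset.card μ) 0 := by
  unfold padList
  rw [← Multiset.coe_add, Multiset.sort_eq]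
  rfl

lemma antitone_aOf {r : ℕ} (μ : Multiset ℕ) : Antitone (aOf (r := r) μ) := by
  intro i j hij
  unfold aOf
  by_cases hj : (j : ℕ) < (padList r μ).length
  · have hi : (i : ℕ) < (padList r μ).length := lt_of_le_of_lt hij hj
    rw [List.getD_eq_getElem _ _ hj, List.getD_eq_getElem _ _ hi]
    rcases eq_or_lt_of_le hij with h1 | h1
    · simp [h1]
    · have := List.pairwise_iff_get.mp (sorted_padList r μ) ⟨i, hi⟩ ⟨j, hj⟩ h1
      simpa using this
  · rw [List.getD_eq_default _ _ (not_lt.mp hj)]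
    exact Nat.zero_le _

lemma ofFn_sorted {r : ℕ} (a : Fin r → ℕ) (ha : Antitone a) :
    List.Pairwise (· ≥ ·) (List.ofFn a) := by
  rw [List.pairwise_iff_get]
  intro i j hij
  rw [List.get_ofFn, List.get_ofFn]
  apply ha
  rw [Fin.le_def]
  simpa using Nat.le_of_lt hij

lemma filter_nonpos_eq_replicate (s : Multiset ℕ) :
    Multiset.filter (fun x => ¬ 0 < x) s
      = Multiset.replicate (Multiset.card s - Multiset.card (Multiset.filter (0 < ·) s)) 0 := by
  rw [Multiset.eq_replicate]
  constructor
  · have := congrArg Multiset.card (Multiset.filter_add_not (fun x => 0 < x) s)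
    rw [Multiset.card_add] at this
    omega
  · intro b hb
    have := (Multiset.mem_filter.mp hb).2
    omega

lemma card_muOf_le {r : ℕ} (a : Fin r → ℕ) : Multiset.card (muOf a) ≤ r := by
  unfold muOf
  calc Multiset.card (Multiset.filter _ _) ≤ Multiset.card (List.ofFn a : Multiset ℕ) :=
        Multiset.card_le_card (Multiset.filter_le _ _)
    _ = r := by rw [Multiset.coe_card, List.length_ofFn]

lemma mem_muOf_pos {r : ℕ} (a : Fin r → ℕ) {x : ℕ} (hx : x ∈ muOf a) : 0 < x :=
  (Multiset.mem_filter.mp hx).2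

lemma sum_muOf {r : ℕ} (a : Fin r → ℕ) : (muOf a).sum = ∑ j, a j := by
  unfold muOf
  have h := Multiset.filter_add_not (fun x => 0 < x) (List.ofFn a : Multiset ℕ)
  have h2 := congrArg Multiset.sum h
  rw [Multiset.sum_add] at h2
  rw [filter_nonpos_eq_replicate, Multiset.sum_replicate, smul_zero, add_zero] at h2
  rw [h2]
  simp [Multiset.sum_coe, List.sum_ofFn]

lemma ofFn_aOf {r : ℕ} (μ : Multiset ℕ) (h : Multiset.card μ ≤ r) :
    List.ofFn (aOf (r := r) μ) = padList r μ := by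
  apply List.ext_getElem
  · simp [length_padList r μ h]
  · intro i h1 h2
    simp only [List.getElem_ofFn]
    unfold aOf
    rw [List.getD_eq_getElem]

lemma muOf_aOf {r : ℕ} (μ : Multiset ℕ) (h : Multiset.card μ ≤ r)
    (hpos : ∀ x ∈ μ, 0 < x) : muOf (aOf (r := r) μ) = μ := by
  unfold muOf
  rw [ofFn_aOf μ h, coe_padList, Multiset.filter_add]
  rw [Multiset.filter_eq_self.mpr hpos]
  have : Multiset.filter (0 < ·) (Multiset.replicate (r - Multiset.card μ) 0) = 0 :=
    Multiset.filter_eq_nil.mpr (fun b hb => by simp [Multiset.eq_of_mem_replicate hb])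
  rw [this, add_zero]

lemma aOf_muOf {r : ℕ} (a : Fin r → ℕ) (ha : Antitone a) : aOf (muOf a) = a := by
  have hperm : (padList r (muOf a) : Multiset ℕ) = (List.ofFn a : Multiset ℕ) := by
    rw [coe_padList]
    conv_rhs => rw [← Multiset.filter_add_not (fun x => 0 < x) (List.ofFn a : Multiset ℕ)]
    rw [filter_nonpos_eq_replicate]
    unfold muOf
    congr 2
    rw [Multiset.coe_card, List.length_ofFn]
  have heq : padList r (muOf a) = List.ofFn a :=
    List.Perm.eq_of_pairwise'
      (sorted_padList _ _) (ofFn_sorted a ha) (Multiset.coe_eq_coe.mp hperm)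
  funext j
  unfold aOf
  rw [heq, List.getD_eq_getElem _ _ (by simp [j.isLt]), List.getElem_ofFn]

/-! ### ν part -/

def nuOf {n : ℕ} (l : Fin n → ℕ) : Multiset ℕ :=
  ∑ i : Fin n, (l i) • ({((i : ℕ) + 1)} : Multiset ℕ)

def lOf (n : ℕ) (ν : Multiset ℕ) (i : Fin n) : ℕ := ν.count ((i : ℕ) + 1)

lemma count_nuOf {n : ℕ} (l : Fin n → ℕ) (v : ℕ) :
    (nuOf l).count v = if h : 1 ≤ v ∧ v ≤ n then l ⟨v - 1, by omega⟩ else 0 := by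
  unfold nuOf
  rw [Multiset.count_sum']
  split_ifs with h
  · rw [Finset.sum_eq_single (⟨v - 1, by omega⟩ : Fin n)]
    · rw [Multiset.count_nsmul, Multiset.count_singleton,
        if_pos (show v = v - 1 + 1 by omega), mul_one]
    · intro b _ hb
      rw [Multiset.count_nsmul, Multiset.count_singleton, if_neg, mul_zero]
      intro hv
      exact hb (Fin.ext (show (b : ℕ) = v - 1 by omega))
    · intro hmem
      exact absurd (Finset.mem_univ _) hmem
  · apply Finset.sum_eq_zero
    intro i _
    rw [Multiset.count_nsmul, Multiset.count_singleton, if_neg, mul_zero]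
    intro hv
    have := i.isLt
    omega

lemma lOf_nuOf {n : ℕ} (l : Fin n → ℕ) : lOf n (nuOf l) = l := by
  funext i
  unfold lOf
  rw [count_nuOf]
  have h : 1 ≤ (i : ℕ) + 1 ∧ (i : ℕ) + 1 ≤ n := ⟨by omega, i.isLt⟩
  rw [dif_pos h]
  exact congrArg l (Fin.ext rfl)

lemma nuOf_lOf {n : ℕ} (ν : Multiset ℕ) (hν : ∀ x ∈ ν, 0 < x ∧ x ≤ n) :
    nuOf (lOf n ν) = ν := by
  ext v
  rw [count_nuOf]
  split_ifs with h
  · unfold lOf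
    congr 1
    show v - 1 + 1 = v
    omega
  · symm
    rw [Multiset.count_eq_zero]
    intro hv
    exact h ⟨(hν v hv).1, (hν v hv).2⟩

lemma sum_nuOf {n : ℕ} (l : Fin n → ℕ) :
    (nuOf l).sum = ∑ i : Fin n, ((i : ℕ) + 1) * l i := by
  unfold nuOf
  have hmap := map_sum Multiset.sumAddMonoidHom
    (fun i : Fin n => l i • ({((i : ℕ) + 1)} : Multiset ℕ)) Finset.univ
  refine Eq.trans hmap ?_
  refine Finset.sum_congr rfl fun i _ => ?_
  show (l i • ({((i : ℕ) + 1)} : Multiset ℕ)).sum = _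
  rw [Multiset.sum_nsmul, Multiset.sum_singleton, smul_eq_mul, mul_comm]

lemma mem_nuOf_pos {n : ℕ} (l : Fin n → ℕ) {x : ℕ} (hx : x ∈ nuOf l) : 0 < x := by
  have := (Multiset.count_pos.mpr hx)
  rw [count_nuOf] at this
  split_ifs at this with h
  · omega
  · omega

/-! ### Main -/


def Sp (n r : ℕ) : Set ((Fin n → ℕ) × (Fin r → ℕ)) :=
  {la | Antitone la.2 ∧
    (∑ i : Fin n, ((i : ℕ) + 1) * la.1 i) + (∑ j : Fin r, la.2 j) = n}

def e1 (n r : ℕ) : {lm : (Fin n → ℕ) × (Fin r → ℕ) //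
    (∑ i : Fin n, ((i : ℕ) + 1) * lm.1 i) + (∑ j : Fin r, ((j : ℕ) + 1) * lm.2 j) = n} ≃
    (Sp n r) where
  toFun lm := ⟨(lm.1.1, sufSum lm.1.2), antitone_sufSum _, by
    rw [sum_sufSum]; exact lm.2⟩
  invFun la := ⟨(la.1.1, difOf la.1.2), by
    have h := la.2.2
    rw [← sufSum_difOf la.1.2 la.2.1, sum_sufSum] at h
    exact h⟩
  left_inv lm := by
    apply Subtype.ext
    exact Prod.ext rfl (difOf_sufSum lm.1.2)
  right_inv la := by
    apply Subtype.ext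
    exact Prod.ext rfl (sufSum_difOf la.1.2 la.2.1)

def e2 (n r : ℕ) : (Sp n r) ≃ (Ppairs n r) where
  toFun la := ⟨(nuOf la.1.1 + muOf la.1.2, muOf la.1.2), by
    refine ⟨?_, ?_, ?_, ?_⟩
    · intro x hx
      rcases Multiset.mem_add.mp hx with h | h
      · exact mem_nuOf_pos _ h
      · exact mem_muOf_pos _ h
    · rw [Multiset.sum_add, sum_nuOf, sum_muOf]
      exact la.2.2
    · exact Multiset.le_add_left _ _
    · exact card_muOf_le _⟩
  invFun p := ⟨(lOf n (p.1.1 - p.1.2), aOf p.1.2), by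
    obtain ⟨hpos, hsum, hle, hcard⟩ := p.2
    have hν : ∀ x ∈ p.1.1 - p.1.2, 0 < x ∧ x ≤ n := by
      intro x hx
      have hx1 : x ∈ p.1.1 := Multiset.mem_of_le (tsub_le_self) hx
      refine ⟨hpos x hx1, ?_⟩
      calc x ≤ p.1.1.sum := Multiset.single_le_sum (fun _ _ => Nat.zero_le _) x hx1
        _ = n := hsum
    have hμpos : ∀ x ∈ p.1.2, 0 < x := fun x hx => hpos x (Multiset.mem_of_le hle hx)
    refine ⟨antitone_aOf _, ?_⟩
    have h1 : ∑ i : Fin n, ((i : ℕ) + 1) * lOf n (p.1.1 - p.1.2) i = (p.1.1 - p.1.2).sum := by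
      rw [← sum_nuOf, nuOf_lOf _ hν]
    have h2 : ∑ j : Fin r, aOf p.1.2 j = p.1.2.sum := by
      rw [← sum_muOf, muOf_aOf _ hcard hμpos]
    rw [h1, h2]
    have h3 := congrArg Multiset.sum (tsub_add_cancel_of_le hle)
    rw [Multiset.sum_add] at h3
    rw [h3, hsum]⟩
  left_inv la := by
    apply Subtype.ext
    apply Prod.ext
    · show lOf n ((nuOf la.1.1 + muOf la.1.2) - muOf la.1.2) = la.1.1
      rw [add_tsub_cancel_right, lOf_nuOf]
    · exact aOf_muOf la.1.2 la.2.1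
  right_inv p := by
    obtain ⟨hpos, hsum, hle, hcard⟩ := p.2
    have hν : ∀ x ∈ p.1.1 - p.1.2, 0 < x ∧ x ≤ n := by
      intro x hx
      have hx1 : x ∈ p.1.1 := Multiset.mem_of_le (tsub_le_self) hx
      refine ⟨hpos x hx1, ?_⟩
      calc x ≤ p.1.1.sum := Multiset.single_le_sum (fun _ _ => Nat.zero_le _) x hx1
        _ = n := hsum
    have hμpos : ∀ x ∈ p.1.2, 0 < x := fun x hx => hpos x (Multiset.mem_of_le hle hx)
    apply Subtype.ext
    have hmu : muOf (aOf (r := r) p.1.2) = p.1.2 := muOf_aOf _ hcard hμpos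
    apply Prod.ext
    · show nuOf (lOf n (p.1.1 - p.1.2)) + muOf (aOf p.1.2) = p.1.1
      rw [nuOf_lOf _ hν, hmu, tsub_add_cancel_of_le hle]
    · exact hmu

/-- the number of monomials `∏ u_i^{l_i} ∏ v_j^{m_j}` of graded
degree `n` in variables `u_1, …, u_n, v_1, …, v_r` (with `deg u_i = i`,
`deg v_j = j`) equals the number of partition pairs of size `n` and type `r`.
Monomials are recorded by their exponent vectors `(l, m)`. -/
theorem stmt_6 (n r : ℕ) :
    Set.ncard {lm : (Fin n → ℕ) × (Fin r → ℕ) |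
      (∑ i : Fin n, ((i : ℕ) + 1) * lm.1 i) + (∑ j : Fin r, ((j : ℕ) + 1) * lm.2 j) = n} =
    Set.ncard (Ppairs n r) := by
  rw [← Nat.card_coe_set_eq, ← Nat.card_coe_set_eq]
  exact Nat.card_congr ((e1 n r).trans (e2 n r))
end
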